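/- For all complex numbers x, y, z, w: if xw - yz = 0, xy² + x²z - z³ - xyw + yw² - w³ = 0 and xz² + z³ + xyw + w³ = 0, then -xy³ + xz³ + z⁴ - x³w - x²zw + x²w² - y²w² + zw³ = 0. (The quartic surface X₄ contains the degree-5, genus-2 curve C.) -/
import Mathlib

/-- The quartic surface `X₄` contains the degree-5, genus-2 curve `C`. -/
theorem X4_contains_curve_C (x y z w : ℂ)
    (h1 : x * w - y * z = 0)
    (h2 : x * y ^ 2 + x ^ 2 * z - z ^ 3 - x * y * w + y * w ^ 2 - w ^ 3 = 0)
    (h3 : x * z ^ 2 + z ^ 3 + x * y * w + w ^ 3 = 0) :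
    -x * y ^ 3 + x * z ^ 3 + z ^ 4 - x ^ 3 * w - x ^ 2 * z * w + x ^ 2 * w ^ 2
      - y ^ 2 * w ^ 2 + z * w ^ 3 = 0 := by
  linear_combination (-(x*x) - x*y - x*z + x*w - w*w) * h1 + (-y - z) * h2 + (x - y) * h3
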